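/- 𝔟 ≤ add(B_M): every family of fewer than 𝔟 meager downward-closed subsets of [ω]^ω has meager union; equivalently, the least cardinality of a family of meager downward-closed subsets of [ω]^ω whose union is not meager is at least 𝔟. -/

import Mathlib

open Set Cardinal MeasureTheory

/-- The characteristic function of a set of naturals, as a point of Cantor space `2^ω`. -/
noncomputable def chi (x : Set ℕ) : ℕ → Bool := fun n => @decide (n ∈ x) (Classical.dec _)

/-- `[ω]^ω`: the collection of infinite subsets of ω. -/
def InfSets : Set (Set ℕ) := {x : Set ℕ | x.Infinite}

/-- `X ⊆ [ω]^ω` is downward closed for almost-inclusion `x ≤ y ↔ (x \ y).Finite`. -/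
def DownClosed (X : Set (Set ℕ)) : Prop :=
  ∀ y ∈ X, ∀ x : Set ℕ, x.Infinite → (x \ y).Finite → x ∈ X

/-- `X` is meager as a subset of Cantor space `2^ω` (product topology on `ℕ → Bool`). -/
def MeagerSet (X : Set (Set ℕ)) : Prop := IsMeagre (chi '' X)

/-- A partition of ω into consecutive finite intervals `I n = [e n, e (n+1))`. -/
structure IntervalPartition where
  e : ℕ → ℕ
  zero : e 0 = 0
  mono : StrictMono e

/-- The `n`-th interval of an interval partition. -/
def IntervalPartition.I (P : IntervalPartition) (n : ℕ) : Set ℕ :=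
  Set.Ico (P.e n) (P.e (n + 1))

/-- `X ⊆ [ω]^ω` is groupwise dense: downward closed, and for every partition of ω into
finite intervals, the union of some infinitely many of the intervals belongs to `X`. -/
def GroupwiseDense (X : Set (Set ℕ)) : Prop :=
  X ⊆ InfSets ∧ DownClosed X ∧
    ∀ P : IntervalPartition, ∃ A : Set ℕ, A.Infinite ∧ (⋃ n ∈ A, P.I n) ∈ X

/-- `g` eventually majorizes `f`. -/
def EvMaj (f g : ℕ → ℕ) : Prop := ∀ᶠ k in Filter.atTop, f k ≤ g k

/-- `M(Π)`: the infinite subsets of ω including only finitely many intervals of `Π`. -/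
def MSet (P : IntervalPartition) : Set (Set ℕ) :=
  {x : Set ℕ | x.Infinite ∧ {n : ℕ | P.I n ⊆ x}.Finite}

/-- The index `n` of the interval `I n` of `P` containing `k`. -/
def idx (P : IntervalPartition) (k : ℕ) : ℕ := Nat.findGreatest (fun n => P.e n ≤ k) k

/-- `F_Π(k)`: the largest element of `I (n+2)`, where `k ∈ I n`. -/
def FPart (P : IntervalPartition) (k : ℕ) : ℕ := P.e (idx P k + 3) - 1

/-- The groupwise density number 𝔤. -/
noncomputable def gNum : Cardinal :=
  sInf {c : Cardinal | ∃ S : Set (Set (Set ℕ)), (∀ G ∈ S, GroupwiseDense G) ∧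
    #S = c ∧ InfSets ∩ ⋂₀ S = ∅}

/-- The bounding number 𝔟. -/
noncomputable def bNum : Cardinal :=
  sInf {c : Cardinal | ∃ F : Set (ℕ → ℕ), #F = c ∧ ∀ g : ℕ → ℕ, ∃ f ∈ F, ¬ EvMaj f g}

/-- The dominating number 𝔡. -/
noncomputable def dNum : Cardinal :=
  sInf {c : Cardinal | ∃ F : Set (ℕ → ℕ), #F = c ∧ ∀ g : ℕ → ℕ, ∃ f ∈ F, EvMaj g f}

/-- `B_M`: the ideal of meager downward-closed subsets of `[ω]^ω`. -/
def BM : Set (Set (Set ℕ)) := {X : Set (Set ℕ) | X ⊆ InfSets ∧ DownClosed X ∧ MeagerSet X}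

/-- `add(B_M)`. -/
noncomputable def addBM : Cardinal :=
  sInf {c : Cardinal | ∃ S : Set (Set (Set ℕ)), S ⊆ BM ∧ #S = c ∧ ⋃₀ S ∉ BM}

/-- `cov(B_M)`. -/
noncomputable def covBM : Cardinal :=
  sInf {c : Cardinal | ∃ S : Set (Set (Set ℕ)), S ⊆ BM ∧ #S = c ∧
    {x : Set ℕ | x.Infinite ∧ xᶜ.Infinite} ⊆ ⋃₀ S}

/-- `unif(B_M)`. -/
noncomputable def unifBM : Cardinal :=
  sInf {c : Cardinal | ∃ S : Set (Set ℕ), (∀ x ∈ S, x.Infinite ∧ xᶜ.Infinite) ∧ #S = c ∧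
    ∀ X ∈ BM, ¬ S ⊆ X}

/-- `cof(B_M)`. -/
noncomputable def cofBM : Cardinal :=
  sInf {c : Cardinal | ∃ C : Set (Set (Set ℕ)), C ⊆ BM ∧ #C = c ∧
    ∀ X ∈ BM, ∃ Y ∈ C, X ⊆ Y}

/-- `X ⊆ [ω]^ω` is dense: every infinite `A` has an infinite subset `B ∈ X`. -/
def DenseM (X : Set (Set ℕ)) : Prop :=
  ∀ A : Set ℕ, A.Infinite → ∃ B ⊆ A, B.Infinite ∧ B ∈ X

/-- 𝔤′: the least number of non-meager downward-closed ideals on ω with empty intersection. -/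
noncomputable def gNum' : Cardinal :=
  sInf {c : Cardinal | ∃ S : Set (Set (Set ℕ)),
    (∀ X ∈ S, X ⊆ InfSets ∧ DownClosed X ∧ (∀ x ∈ X, ∀ y ∈ X, x ∪ y ∈ X) ∧ ¬ MeagerSet X) ∧
    #S = c ∧ InfSets ∩ ⋂₀ S = ∅}

/-- The splitting number 𝔰. -/
noncomputable def sNum : Cardinal :=
  sInf {c : Cardinal | ∃ S : Set (Set ℕ), #S = c ∧
    ∀ x : Set ℕ, x.Infinite → ∃ y ∈ S, (x ∩ y).Infinite ∧ (x \ y).Infinite}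

section Aux

/-! ### Cantor space basics -/

/-- The basic cylinder determined by the first `m` values of `f`. -/
def Cyl (f : ℕ → Bool) (m : ℕ) : Set (ℕ → Bool) := {g | ∀ k < m, g k = f k}

lemma self_mem_Cyl (f : ℕ → Bool) (m : ℕ) : f ∈ Cyl f m := fun _ _ => rfl

lemma Cyl_anti {f : ℕ → Bool} {m m' : ℕ} (h : m ≤ m') : Cyl f m' ⊆ Cyl f m :=
  fun _ hg k hk => hg k (lt_of_lt_of_le hk h)

lemma isOpen_Cyl (f : ℕ → Bool) (m : ℕ) : IsOpen (Cyl f m) := by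
  have h : Cyl f m = ⋂ k ∈ Set.Iio m, {g : ℕ → Bool | g k = f k} := by
    ext g; simp [Cyl]
  rw [h]
  refine (Set.finite_Iio m).isOpen_biInter fun k _ => ?_
  have h2 : IsOpen ((fun g : ℕ → Bool => g k) ⁻¹' {f k}) :=
    IsOpen.preimage (continuous_apply k) (isOpen_discrete ({f k} : Set Bool))
  exact h2

lemma exists_Cyl_subset {U : Set (ℕ → Bool)} (hU : IsOpen U) {f : ℕ → Bool} (hf : f ∈ U) :
    ∃ m, Cyl f m ⊆ U := by
  obtain ⟨I, u, hu, hsub⟩ := isOpen_pi_iff.1 hU f hf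
  refine ⟨I.sup id + 1, fun g hg => hsub ?_⟩
  rw [Set.mem_pi]
  intro a ha
  have h1 : g a = f a := hg a (Nat.lt_succ_of_le (Finset.le_sup (f := id) ha))
  rw [h1]; exact (hu a ha).2

/-- Escaping a closed set with empty interior, putting a `true` at position `m`. -/
lemma escape {F : Set (ℕ → Bool)} (hcl : IsClosed F) (hint : interior F = ∅)
    (f : ℕ → Bool) (m : ℕ) :
    ∃ (g : ℕ → Bool) (m' : ℕ), m < m' ∧ (∀ k < m, g k = f k) ∧ g m = true ∧
      Cyl g m' ∩ F = ∅ := by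
  have hns : ¬ Cyl (Function.update f m true) (m + 1) ⊆ F := by
    intro hsubF
    have h2 : Cyl (Function.update f m true) (m + 1) ⊆ interior F :=
      (isOpen_Cyl _ _).subset_interior_iff.2 hsubF
    rw [hint] at h2
    exact h2 (self_mem_Cyl _ _)
  obtain ⟨g, hg1, hg2⟩ := Set.not_subset.1 hns
  obtain ⟨m'', hm''⟩ := exists_Cyl_subset hcl.isOpen_compl hg2
  refine ⟨g, max m'' (m + 1), lt_of_lt_of_le (Nat.lt_succ_self m) (le_max_right _ _),
    ?_, ?_, ?_⟩
  · intro k hk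
    have h3 := hg1 k (lt_of_lt_of_le hk (Nat.le_succ m))
    rwa [Function.update_of_ne (Nat.ne_of_lt hk) _ _] at h3
  · have h3 := hg1 m (Nat.lt_succ_self m)
    rwa [Function.update_self] at h3
  · refine Set.eq_empty_iff_forall_notMem.2 fun p hp => ?_
    exact hm'' (Cyl_anti (le_max_left _ _) hp.1) hp.2

/-! ### Meager sets from covers by closed sets with empty interior -/

lemma isMeagre_of_cover {Y : Set (ℕ → Bool)} {C : ℕ → Set (ℕ → Bool)}
    (hcl : ∀ n, IsClosed (C n)) (hint : ∀ n, interior (C n) = ∅)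
    (hsub : Y ⊆ ⋃ n, C n) : IsMeagre Y := by
  refine IsMeagre.mono hsub (isMeagre_iUnion fun n => ?_)
  show (C n)ᶜ ∈ residual _
  exact residual_of_dense_open (hcl n).isOpen_compl
    (interior_eq_empty_iff_dense_compl.1 (hint n))

/-! ### chi basics -/

lemma chi_eq_true {x : Set ℕ} {k : ℕ} : chi x k = true ↔ k ∈ x := by simp [chi]

lemma chi_eq_false {x : Set ℕ} {k : ℕ} : chi x k = false ↔ k ∉ x := by simp [chi]

lemma chi_setOf (f : ℕ → Bool) : chi {k | f k = true} = f := by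
  funext k
  rcases hf : f k with _ | _ <;> simp [chi, hf]

/-! ### Interval partitions -/

private def seqE (B : ℕ → ℕ → ℕ) : ℕ → ℕ
  | 0 => 0
  | n + 1 => max (B n (seqE B n)) (seqE B n) + 1

lemma seqE_strictMono (B : ℕ → ℕ → ℕ) : StrictMono (seqE B) :=
  strictMono_nat_of_lt_succ fun _ => Nat.lt_succ_of_le (le_max_right _ _)

lemma seqE_lt (B : ℕ → ℕ → ℕ) (n : ℕ) : B n (seqE B n) < seqE B (n + 1) :=
  Nat.lt_succ_of_le (le_max_left _ _)

/-- Partition built from a "next bound" function. -/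
def mkPart (B : ℕ → ℕ → ℕ) : IntervalPartition := ⟨seqE B, rfl, seqE_strictMono B⟩

lemma idx_le (P : IntervalPartition) (k : ℕ) : P.e (idx P k) ≤ k :=
  Nat.findGreatest_spec (P := fun n => P.e n ≤ k) (Nat.zero_le k)
    (show P.e 0 ≤ k by rw [P.zero]; exact Nat.zero_le k)

lemma lt_idx_succ (P : IntervalPartition) (k : ℕ) : k < P.e (idx P k + 1) := by
  by_contra h
  push_neg at h
  have h2 : idx P k + 1 ≤ k := le_trans P.mono.le_apply h
  exact Nat.findGreatest_is_greatest (P := fun n => P.e n ≤ k) (Nat.lt_succ_self _) h2 h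

lemma mem_I_idx (P : IntervalPartition) (k : ℕ) : k ∈ P.I (idx P k) :=
  ⟨idx_le P k, lt_idx_succ P k⟩

lemma eq_idx_of_mem_I {P : IntervalPartition} {n k : ℕ} (h : k ∈ P.I n) : n = idx P k := by
  obtain ⟨h1, h2⟩ := h
  rcases lt_trichotomy n (idx P k) with hlt | he | hgt
  · have : P.e (n + 1) ≤ P.e (idx P k) := P.mono.monotone (Nat.succ_le_of_lt hlt)
    exact absurd (lt_of_lt_of_le h2 (le_trans this (idx_le P k))) (lt_irrefl k)
  · exact he
  · have : P.e (idx P k + 1) ≤ P.e n := P.mono.monotone (Nat.succ_le_of_lt hgt)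
    exact absurd (lt_of_lt_of_le (lt_idx_succ P k) (le_trans this h1)) (lt_irrefl k)

lemma self_mem_I (P : IntervalPartition) (n : ℕ) : P.e n ∈ P.I n :=
  ⟨le_refl _, P.mono (Nat.lt_succ_self n)⟩

/-! ### `MSet` lemmas -/

lemma mset_subset_mset {P Q : IntervalPartition} {N : ℕ}
    (h : ∀ n, N ≤ n → ∃ j, P.I j ⊆ Q.I n) : MSet P ⊆ MSet Q := by
  rintro x ⟨hxinf, hxfin⟩
  refine ⟨hxinf, ?_⟩
  by_contra hinf
  have hinf : {n | Q.I n ⊆ x}.Infinite := hinf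
  have h' : ∀ n, ∃ j, N ≤ n → P.I j ⊆ Q.I n := fun n => by
    by_cases hn : N ≤ n
    · exact (h n hn).imp fun j hj _ => hj
    · exact ⟨0, fun hc => absurd hc hn⟩
  choose j hj using h'
  have hB'inf : ({n | Q.I n ⊆ x} \ Set.Iio N).Infinite := hinf.diff (Set.finite_Iio N)
  have hmapsub : j '' ({n | Q.I n ⊆ x} \ Set.Iio N) ⊆ {m | P.I m ⊆ x} := by
    rintro m ⟨n, hn, rfl⟩
    exact fun l hl => hn.1 (hj n (not_lt.1 hn.2) hl)
  have hInj : Set.InjOn j ({n | Q.I n ⊆ x} \ Set.Iio N) := by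
    intro n hn n' hn' heq
    have h1 : P.e (j n) ∈ Q.I n := hj n (not_lt.1 hn.2) (self_mem_I P (j n))
    have h2 : P.e (j n') ∈ Q.I n' := hj n' (not_lt.1 hn'.2) (self_mem_I P (j n'))
    rw [← heq] at h2
    rw [eq_idx_of_mem_I h1, eq_idx_of_mem_I h2]
  exact (hB'inf.image hInj) (hxfin.subset hmapsub)

lemma meagerSet_MSet (P : IntervalPartition) : MeagerSet (MSet P) := by
  apply isMeagre_of_cover
    (C := fun N => {f : ℕ → Bool | ∀ n, N ≤ n → ∃ k, k ∈ P.I n ∧ f k = false})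
  · intro N
    have h : {f : ℕ → Bool | ∀ n, N ≤ n → ∃ k, k ∈ P.I n ∧ f k = false}
        = ⋂ n ∈ {n | N ≤ n}, ⋃ k ∈ P.I n, {f : ℕ → Bool | f k = false} := by
      ext f; simp
    rw [h]
    refine isClosed_biInter fun n _ => ?_
    refine (Set.finite_Ico _ _).isClosed_biUnion fun k _ => ?_
    have h2 : IsClosed ((fun g : ℕ → Bool => g k) ⁻¹' {false}) :=
      IsClosed.preimage (continuous_apply k) (isClosed_discrete ({false} : Set Bool))
    exact h2
  · intro N
    refine Set.eq_empty_iff_forall_notMem.2 fun f hf => ?_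
    obtain ⟨m, hm⟩ := exists_Cyl_subset isOpen_interior hf
    have hmn : m ≤ P.e (max N m) := le_trans (le_max_right N m) P.mono.le_apply
    have hg : (fun k => if P.e (max N m) ≤ k then true else f k) ∈ Cyl f m := by
      intro k hk
      have : ¬ P.e (max N m) ≤ k := not_le.2 (lt_of_lt_of_le hk hmn)
      simp [this]
    obtain ⟨k, hk, hfalse⟩ := interior_subset (hm hg) (max N m) (le_max_left N m)
    have hfalse' : (if P.e (max N m) ≤ k then true else f k) = false := hfalse
    rw [if_pos hk.1] at hfalse'
    exact Bool.noConfusion hfalse'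
  · rintro f ⟨x, ⟨hxinf, hxfin⟩, rfl⟩
    obtain ⟨N, hN⟩ := hxfin.bddAbove
    refine Set.mem_iUnion.2 ⟨N + 1, fun n hn => ?_⟩
    have hnot : ¬ P.I n ⊆ x := fun hc => by
      have : n ≤ N := hN hc
      omega
    obtain ⟨k, hk1, hk2⟩ := Set.not_subset.1 hnot
    exact ⟨k, hk1, chi_eq_false.2 hk2⟩

/-! ### Covers of meager sets by increasing closed nowhere dense sets -/

lemma exists_increasing_cover {Y : Set (ℕ → Bool)} (h : IsMeagre Y) :
    ∃ F : ℕ → Set (ℕ → Bool), (∀ n, IsClosed (F n)) ∧ (∀ n, interior (F n) = ∅) ∧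
      (∀ m n, m ≤ n → F m ⊆ F n) ∧ Y ⊆ ⋃ n, F n := by
  obtain ⟨S, hS, hc, hsub⟩ := isMeagre_iff_countable_union_isNowhereDense.1 h
  obtain ⟨f, hf⟩ := (hc.insert ∅).exists_eq_range ⟨∅, Set.mem_insert _ _⟩
  have hnwd : ∀ n, IsNowhereDense (f n) := by
    intro n
    have h1 : f n ∈ insert ∅ S := hf ▸ Set.mem_range_self n
    rcases h1 with h0 | hSn
    · rw [h0]; exact isNowhereDense_empty
    · exact hS _ hSn
  have hclosed2 : ∀ n, IsClosed (⋃ k ∈ Finset.range (n + 1), closure (f k)) := by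
    intro n
    induction n with
    | zero =>
      simp only [zero_add, Finset.range_one, Finset.set_biUnion_singleton]
      exact isClosed_closure
    | succ n ih =>
      rw [Finset.range_add_one, Finset.set_biUnion_insert]
      exact IsClosed.union isClosed_closure ih
  refine ⟨fun n => ⋃ k ∈ Finset.range (n + 1), closure (f k), ?_, ?_, ?_, ?_⟩
  · intro n
    exact hclosed2 n
  · have hint2 : ∀ n, interior (⋃ k ∈ Finset.range (n + 1), closure (f k)) = ∅ := by
      intro n
      induction n with
      | zero =>
        simp only [zero_add, Finset.range_one, Finset.set_biUnion_singleton]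
        exact hnwd 0
      | succ n ih =>
        have hstep : (⋃ k ∈ Finset.range (n + 1 + 1), closure (f k))
            = (⋃ k ∈ Finset.range (n + 1), closure (f k)) ∪ closure (f (n + 1)) := by
          rw [Finset.range_add_one, Finset.set_biUnion_insert]
          exact Set.union_comm _ _
        rw [hstep, interior_union_isClosed_of_interior_empty (hclosed2 n) ?_]
        · exact ih
        · exact hnwd (n + 1)
    intro n
    exact hint2 n
  · intro m n hmn p hp
    obtain ⟨t, ht, hpt⟩ := Set.mem_iUnion₂.1 hp
    exact Set.mem_iUnion₂.2 ⟨t, Finset.mem_range.2 (lt_of_lt_of_le (Finset.mem_range.1 ht)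
      (by omega)), hpt⟩
  · intro p hp
    obtain ⟨t, htS, hpt⟩ := hsub hp
    have h1 : t ∈ insert ∅ S := Set.mem_insert_iff.2 (Or.inr htS)
    rw [hf] at h1
    obtain ⟨n, rfl⟩ := h1
    exact Set.mem_iUnion.2 ⟨n, Set.mem_iUnion₂.2 ⟨n, Finset.self_mem_range_succ n,
      subset_closure hpt⟩⟩

end Aux

section Main

/-! ### Talagrand: meager downward-closed sets live inside some `MSet` -/

lemma exists_partition_of_meager {X : Set (Set ℕ)} (hsub : X ⊆ InfSets)
    (hdc : DownClosed X) (hm : MeagerSet X) : ∃ P : IntervalPartition, X ⊆ MSet P := by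
  classical
  obtain ⟨F, hFcl, hFint, hFmono, hFsub⟩ := exists_increasing_cover hm
  have hesc : ∀ (n : ℕ) (f : ℕ → Bool) (m : ℕ), ∃ (g : ℕ → Bool) (m' : ℕ),
      m < m' ∧ (∀ k < m, g k = f k) ∧ g m = true ∧ Cyl g m' ∩ F n = ∅ :=
    fun n f m => escape (hFcl n) (hFint n) f m
  choose G M hM hGpre hGtrue hGdisj using hesc
  have hBex : ∀ n m, ∃ b : ℕ, ∀ f : ℕ → Bool, (∀ k, m ≤ k → f k = false) → M n f m ≤ b := by
    intro n m
    refine ⟨(Finset.univ : Finset (Fin m → Bool)).sup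
      (fun v => M n (fun k => if h : k < m then v ⟨k, h⟩ else false) m), fun f hfz => ?_⟩
    have hfe : f = fun k => if h : k < m then (fun i : Fin m => f i) ⟨k, h⟩ else false := by
      funext k
      by_cases h : k < m
      · simp [h]
      · simp [h, hfz k (le_of_not_gt h)]
    have hle := Finset.le_sup
      (f := fun v : Fin m → Bool => M n (fun k => if h : k < m then v ⟨k, h⟩ else false) m)
      (Finset.mem_univ (fun i : Fin m => f i))
    rw [hfe]
    exact hle
  choose B hMB using hBex
  refine ⟨mkPart B, fun x hx => ⟨hsub hx, ?_⟩⟩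
  set P : IntervalPartition := mkPart B with hPdef
  by_contra hA
  set A : Set ℕ := {n | P.I n ⊆ x} with hAdef
  have hAinf : A.Infinite := hA
  set e : ℕ → ℕ := P.e with hedef
  set h : ℕ → (ℕ → Bool) := fun n => Nat.rec (motive := fun _ => ℕ → Bool) (fun _ => false)
    (fun n hn => fun k => if k < e (n + 1) then (if n ∈ A then G n hn (e n) k else hn k)
      else false) n with hhdef
  have hstep : ∀ n, h (n + 1) = fun k =>
      if k < e (n + 1) then (if n ∈ A then G n (h n) (e n) k else h n k) else false :=
    fun n => rfl
  have hhigh : ∀ n k, e n ≤ k → h n k = false := by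
    intro n k hk
    cases n with
    | zero => rfl
    | succ n =>
      simp only [hstep n]
      rw [if_neg (not_lt.2 hk)]
  have hagree : ∀ n k, k < e n → h (n + 1) k = h n k := by
    intro n k hk
    have hk' : k < e (n + 1) := lt_trans hk (P.mono (Nat.lt_succ_self n))
    simp only [hstep n]
    rw [if_pos hk']
    by_cases hA' : n ∈ A
    · rw [if_pos hA']
      exact hGpre n (h n) (e n) k hk
    · rw [if_neg hA']
  have hagree' : ∀ n m k, n ≤ m → k < e n → h m k = h n k := by
    intro n m k hnm hk
    induction m, hnm using Nat.le_induction with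
    | base => rfl
    | succ m hnm ih =>
      rw [hagree m k (lt_of_lt_of_le hk (P.mono.monotone hnm)), ih]
  set g : ℕ → Bool := fun k => h (k + 1) k with hgdef
  have hgh : ∀ n k, k < e n → g k = h n k := by
    intro n k hk
    rcases le_total n (k + 1) with hle | hle
    · exact hagree' n (k + 1) k hle hk
    · exact (hagree' (k + 1) n k hle (lt_of_lt_of_le (Nat.lt_succ_self k)
        P.mono.le_apply)).symm
  set y : Set ℕ := {k | g k = true} with hydef
  have hkey1 : ∀ n ∈ A, g (e n) = true := by
    intro n hn
    have h1 : g (e n) = h (n + 1) (e n) := hgh (n + 1) (e n) (P.mono (Nat.lt_succ_self n))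
    rw [h1]
    simp only [hstep n]
    rw [if_pos (P.mono (Nat.lt_succ_self n)), if_pos hn]
    exact hGtrue n (h n) (e n)
  have hkey2 : ∀ n, n ∉ A → ∀ k, k ∈ P.I n → g k = false := by
    intro n hn k hk
    have h1 : g k = h (n + 1) k := hgh (n + 1) k hk.2
    rw [h1]
    simp only [hstep n]
    rw [if_pos hk.2, if_neg hn]
    exact hhigh n k hk.1
  have hysub : y ⊆ x := by
    intro k hk
    have hmem := mem_I_idx P k
    by_cases hid : idx P k ∈ A
    · exact hid hmem
    · have h1 : g k = false := hkey2 _ hid k hmem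
      have h2 : g k = true := hk
      rw [h1] at h2
      exact Bool.noConfusion h2
  have hyinf : y.Infinite := by
    apply Set.infinite_of_forall_exists_gt
    intro a
    obtain ⟨n, hnA, hna⟩ := hAinf.exists_gt a
    exact ⟨e n, hkey1 n hnA, lt_of_lt_of_le hna P.mono.le_apply⟩
  have hyX : y ∈ X := by
    refine hdc x hx y hyinf ?_
    rw [Set.diff_eq_empty.2 hysub]
    exact Set.finite_empty
  have hchiy : chi y = g := chi_setOf g
  have hmem2 : chi y ∈ ⋃ n, F n := hFsub (Set.mem_image_of_mem chi hyX)
  obtain ⟨n0, hn0⟩ := Set.mem_iUnion.1 hmem2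
  obtain ⟨n, hnA, hnn⟩ := hAinf.exists_gt n0
  have hgF : g ∈ F n := by
    rw [← hchiy]
    exact hFmono n0 n (le_of_lt hnn) hn0
  have hcyl : g ∈ Cyl (G n (h n) (e n)) (M n (h n) (e n)) := by
    intro k hk
    have hk2 : k < e (n + 1) := lt_of_lt_of_le hk (le_trans (hMB n (e n) (h n) (hhigh n))
      (le_of_lt (seqE_lt B n)))
    rw [hgh (n + 1) k hk2]
    simp only [hstep n]
    rw [if_pos hk2, if_pos hnA]
  have : g ∈ Cyl (G n (h n) (e n)) (M n (h n) (e n)) ∩ F n := ⟨hcyl, hgF⟩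
  rw [hGdisj n (h n) (e n)] at this
  exact this

/-! ### Fewer than `𝔟` many functions are eventually majorized -/

lemma exists_evMaj {ι : Type} (f : ι → ℕ → ℕ) (hlt : #ι < bNum) :
    ∃ g : ℕ → ℕ, ∀ i, EvMaj (f i) g := by
  by_contra hcon
  push_neg at hcon
  have hmem : #(Set.range f) ∈ {c : Cardinal | ∃ F : Set (ℕ → ℕ), #F = c ∧
      ∀ g : ℕ → ℕ, ∃ f' ∈ F, ¬ EvMaj f' g} := by
    refine ⟨Set.range f, rfl, fun g => ?_⟩
    obtain ⟨i, hi⟩ := hcon g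
    exact ⟨f i, Set.mem_range_self i, hi⟩
  have h1 : bNum ≤ #(Set.range f) := csInf_le (OrderBot.bddBelow _) hmem
  exact absurd (lt_of_le_of_lt (le_trans h1 Cardinal.mk_range_le) hlt) (lt_irrefl _)

/-! ### The key lemma -/

lemma key_union {ι : Type} (X : ι → Set (Set ℕ)) (hlt : #ι < bNum)
    (hX : ∀ i, X i ⊆ InfSets ∧ DownClosed (X i) ∧ MeagerSet (X i)) :
    MeagerSet (⋃ i, X i) := by
  have hP : ∀ i, ∃ P : IntervalPartition, X i ⊆ MSet P := fun i =>
    exists_partition_of_meager (hX i).1 (hX i).2.1 (hX i).2.2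
  choose P hPX using hP
  obtain ⟨g, hg⟩ := exists_evMaj (fun i k => (P i).e (idx (P i) k + 2)) hlt
  set Q : IntervalPartition := mkPart (fun _ m => g m) with hQdef
  have hsubQ : ∀ i, MSet (P i) ⊆ MSet Q := by
    intro i
    obtain ⟨N, hN⟩ := Filter.eventually_atTop.1 (hg i)
    refine mset_subset_mset (N := N) fun n hn => ?_
    have hge : N ≤ Q.e n := le_trans hn Q.mono.le_apply
    refine ⟨idx (P i) (Q.e n) + 1, fun l hl => ?_⟩
    obtain ⟨hl1, hl2⟩ := hl
    constructor
    · exact le_of_lt (lt_of_lt_of_le (lt_idx_succ (P i) (Q.e n)) hl1)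
    · have h3 : (P i).e (idx (P i) (Q.e n) + 2) ≤ g (Q.e n) := hN (Q.e n) hge
      have h4 : g (Q.e n) < Q.e (n + 1) := seqE_lt (fun _ m => g m) n
      exact lt_of_lt_of_le hl2 (le_trans h3 (le_of_lt h4))
  have hunion : (⋃ i, X i) ⊆ MSet Q :=
    Set.iUnion_subset fun i => (hPX i).trans (hsubQ i)
  exact (meagerSet_MSet Q).mono (Set.image_mono (f := chi) hunion)

/-! ### A witness that `addBM`'s defining set is nonempty -/

lemma below_mem_BM {y : Set ℕ} (hy : yᶜ.Infinite) :
    {z : Set ℕ | z.Infinite ∧ (z \ y).Finite} ∈ BM := by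
  refine ⟨fun z hz => hz.1, ?_, ?_⟩
  · rintro z ⟨_, hz2⟩ w hw1 hw2
    refine ⟨hw1, ?_⟩
    have hss : w \ y ⊆ (w \ z) ∪ (z \ y) := by
      rintro a ⟨ha1, ha2⟩
      by_cases h : a ∈ z
      · exact Or.inr ⟨h, ha2⟩
      · exact Or.inl ⟨ha1, h⟩
    exact ((hw2.union hz2).subset hss)
  · apply isMeagre_of_cover
      (C := fun N => {f : ℕ → Bool | ∀ k, k ∉ y → N ≤ k → f k = false})
    · intro N
      have h : {f : ℕ → Bool | ∀ k, k ∉ y → N ≤ k → f k = false}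
          = ⋂ k ∈ {k | k ∉ y ∧ N ≤ k}, {f : ℕ → Bool | f k = false} := by
        ext f; simp [and_imp]
      rw [h]
      refine isClosed_biInter fun k _ => ?_
      have h2 : IsClosed ((fun g : ℕ → Bool => g k) ⁻¹' {false}) :=
        IsClosed.preimage (continuous_apply k) (isClosed_discrete ({false} : Set Bool))
      exact h2
    · intro N
      refine Set.eq_empty_iff_forall_notMem.2 fun f hf => ?_
      obtain ⟨m, hm⟩ := exists_Cyl_subset isOpen_interior hf
      obtain ⟨k, hk, hklt⟩ := hy.exists_gt (max N m)
      have hg : Function.update f k true ∈ Cyl f m := by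
        intro l hl
        have h1 : m ≤ max N m := le_max_right N m
        exact Function.update_of_ne (by omega) _ _
      have h2 := interior_subset (hm hg) k hk (by omega)
      rw [Function.update_self] at h2
      exact Bool.noConfusion h2
    · rintro f ⟨z, ⟨_, hz2⟩, rfl⟩
      obtain ⟨N, hN⟩ := hz2.bddAbove
      refine Set.mem_iUnion.2 ⟨N + 1, fun k hk1 hk2 => ?_⟩
      refine chi_eq_false.2 fun hkz => ?_
      have : k ≤ N := hN ⟨hkz, hk1⟩
      omega

lemma not_meager_big : ¬ MeagerSet {y : Set ℕ | y.Infinite ∧ yᶜ.Infinite} := by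
  intro h
  have hA : IsMeagre {f : ℕ → Bool | {k | f k = true}.Finite} := by
    apply isMeagre_of_cover (C := fun N => {f : ℕ → Bool | ∀ k, N ≤ k → f k = false})
    · intro N
      have heq : {f : ℕ → Bool | ∀ k, N ≤ k → f k = false}
          = ⋂ k ∈ {k | N ≤ k}, {f : ℕ → Bool | f k = false} := by
        ext f; simp
      rw [heq]
      refine isClosed_biInter fun k _ => ?_
      have h2 : IsClosed ((fun g : ℕ → Bool => g k) ⁻¹' {false}) :=
        IsClosed.preimage (continuous_apply k) (isClosed_discrete ({false} : Set Bool))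
      exact h2
    · intro N
      refine Set.eq_empty_iff_forall_notMem.2 fun f hf => ?_
      obtain ⟨m, hm⟩ := exists_Cyl_subset isOpen_interior hf
      have hg : Function.update f (max N m) true ∈ Cyl f m := by
        intro l hl
        have h1 : m ≤ max N m := le_max_right N m
        exact Function.update_of_ne (by omega) _ _
      have h2 := interior_subset (hm hg) (max N m) (le_max_left N m)
      rw [Function.update_self] at h2
      exact Bool.noConfusion h2
    · intro f hf
      obtain ⟨N, hN⟩ := Set.Finite.bddAbove hf
      refine Set.mem_iUnion.2 ⟨N + 1, fun k hk => ?_⟩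
      rcases hfk : f k with _ | _
      · rfl
      · have : k ≤ N := hN hfk
        omega
  have hB : IsMeagre {f : ℕ → Bool | {k | f k = false}.Finite} := by
    apply isMeagre_of_cover (C := fun N => {f : ℕ → Bool | ∀ k, N ≤ k → f k = true})
    · intro N
      have heq : {f : ℕ → Bool | ∀ k, N ≤ k → f k = true}
          = ⋂ k ∈ {k | N ≤ k}, {f : ℕ → Bool | f k = true} := by
        ext f; simp
      rw [heq]
      refine isClosed_biInter fun k _ => ?_
      have h2 : IsClosed ((fun g : ℕ → Bool => g k) ⁻¹' {true}) :=
        IsClosed.preimage (continuous_apply k) (isClosed_discrete ({true} : Set Bool))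
      exact h2
    · intro N
      refine Set.eq_empty_iff_forall_notMem.2 fun f hf => ?_
      obtain ⟨m, hm⟩ := exists_Cyl_subset isOpen_interior hf
      have hg : Function.update f (max N m) false ∈ Cyl f m := by
        intro l hl
        have h1 : m ≤ max N m := le_max_right N m
        exact Function.update_of_ne (by omega) _ _
      have h2 := interior_subset (hm hg) (max N m) (le_max_left N m)
      rw [Function.update_self] at h2
      exact Bool.noConfusion h2
    · intro f hf
      obtain ⟨N, hN⟩ := Set.Finite.bddAbove hf
      refine Set.mem_iUnion.2 ⟨N + 1, fun k hk => ?_⟩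
      rcases hfk : f k with _ | _
      · have : k ≤ N := hN hfk
        omega
      · rfl
  have huniv : IsMeagre (Set.univ : Set (ℕ → Bool)) := by
    have hsub : (Set.univ : Set (ℕ → Bool)) ⊆
        chi '' {y : Set ℕ | y.Infinite ∧ yᶜ.Infinite} ∪
          ({f : ℕ → Bool | {k | f k = true}.Finite} ∪
            {f : ℕ → Bool | {k | f k = false}.Finite}) := by
      intro f _
      by_cases h1 : {k | f k = true}.Finite
      · exact Or.inr (Or.inl h1)
      by_cases h2 : {k | f k = false}.Finite
      · exact Or.inr (Or.inr h2)
      · refine Or.inl ⟨{k | f k = true}, ⟨h1, ?_⟩, chi_setOf f⟩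
        have heq : {k | f k = true}ᶜ = {k | f k = false} := by
          ext k; simp
        rw [heq]; exact h2
    refine IsMeagre.mono hsub ?_
    show (chi '' {y : Set ℕ | y.Infinite ∧ yᶜ.Infinite} ∪
          ({f : ℕ → Bool | {k | f k = true}.Finite} ∪
            {f : ℕ → Bool | {k | f k = false}.Finite}))ᶜ ∈ residual _
    rw [Set.compl_union, Set.compl_union]
    exact Filter.inter_mem h (Filter.inter_mem hA hB)
  have hdense : Dense (∅ : Set (ℕ → Bool)) := by
    have h0 : (Set.univ : Set (ℕ → Bool))ᶜ ∈ residual _ := huniv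
    rw [Set.compl_univ] at h0
    exact dense_of_mem_residual h0
  obtain ⟨f, hf⟩ := hdense.nonempty
  exact hf

lemma sUnion_BM_not_mem : ⋃₀ BM ∉ BM := by
  rintro ⟨-, -, hmeag⟩
  apply not_meager_big
  refine IsMeagre.mono (Set.image_mono (f := chi) ?_) hmeag
  intro y hy
  exact Set.mem_sUnion.2 ⟨{z : Set ℕ | z.Infinite ∧ (z \ y).Finite}, below_mem_BM hy.2,
    hy.1, by rw [Set.diff_self]; exact Set.finite_empty⟩

end Main

/-- 𝔟 ≤ add(B_M). -/
theorem stmt6 :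
    bNum ≤ addBM ∧
    ∀ (ι : Type) (X : ι → Set (Set ℕ)), #ι < bNum →
      (∀ i, X i ⊆ InfSets ∧ DownClosed (X i) ∧ MeagerSet (X i)) →
      MeagerSet (⋃ i, X i) := by
  constructor
  · apply le_csInf
    · exact ⟨_, BM, Set.Subset.rfl, rfl, sUnion_BM_not_mem⟩
    · rintro c ⟨S, hS1, hS2, hS3⟩
      by_contra hlt
      push_neg at hlt
      apply hS3
      have hm : MeagerSet (⋃ i : S, (i : Set (Set ℕ))) :=
        key_union (fun i : S => (i : Set (Set ℕ)))
          (by rw [hS2]; exact hlt) (fun i => hS1 i.2)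
      refine ⟨Set.sUnion_subset fun T hT => (hS1 hT).1, ?_, ?_⟩
      · rintro z hz w hw1 hw2
        obtain ⟨T, hT, hzT⟩ := hz
        exact ⟨T, hT, (hS1 hT).2.1 z hzT w hw1 hw2⟩
      · rw [Set.sUnion_eq_iUnion]
        exact hm
  · exact fun ι X hlt hX => key_union X hlt hX
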